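/- There exists a topological space that is k₁-Hausdorff but not Hausdorff (T₂). -/

import Mathlib

open Set Filter Topology

universe u

/-- A subset `C` of a space `X` is k₁-closed provided for every compact subset `K` of `X`,
the intersection `C ∩ K` is closed in the subspace topology on `K`. -/
def IsK1Closed {X : Type u} [TopologicalSpace X] (C : Set X) : Prop :=
  ∀ K : Set X, IsCompact K → IsClosed ((Subtype.val : K → X) ⁻¹' C)

/-- A space is k₁-Hausdorff provided its diagonal is k₁-closed in its square. -/
def K1Hausdorff (X : Type u) [TopologicalSpace X] : Prop :=
  IsK1Closed {p : X × X | p.1 = p.2}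

/-- A space is KC provided every compact subset is closed. -/
def KCSpace (X : Type u) [TopologicalSpace X] : Prop :=
  ∀ K : Set X, IsCompact K → IsClosed K

/-- A space `X` is weakly Hausdorff provided for every compact Hausdorff space `K` and
continuous `f : K → X`, the image of `f` is closed in `X`. -/
def WeaklyHausdorff (X : Type u) [TopologicalSpace X] : Prop :=
  ∀ (K : Type u) [TopologicalSpace K] [CompactSpace K] [T2Space K]
    (f : K → X), Continuous f → IsClosed (Set.range f)

/-- A subset `C` of `X` is k₂-closed provided for every compact Hausdorff space `K` and
continuous `f : K → X`, the preimage `f ⁻¹' C` is closed in `K`. -/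
def IsK2Closed {X : Type u} [TopologicalSpace X] (C : Set X) : Prop :=
  ∀ (K : Type u) [TopologicalSpace K] [CompactSpace K] [T2Space K]
    (f : K → X), Continuous f → IsClosed (f ⁻¹' C)

/-- A space is k₂-Hausdorff provided its diagonal is k₂-closed in its square. -/
def K2Hausdorff (X : Type u) [TopologicalSpace X] : Prop :=
  IsK2Closed {p : X × X | p.1 = p.2}

/-- A space has unique sequential limits provided every convergent sequence has a unique limit. -/
def UniqueSequentialLimits (X : Type u) [TopologicalSpace X] : Prop :=
  ∀ (a : ℕ → X) (l₀ l₁ : X),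
    Filter.Tendsto a Filter.atTop (nhds l₀) →
    Filter.Tendsto a Filter.atTop (nhds l₁) → l₀ = l₁


/-- The cocountable topology on ℝ. -/
def CocountReal : Type := ℝ

instance : TopologicalSpace CocountReal where
  IsOpen s := s = ∅ ∨ sᶜ.Countable
  isOpen_univ := Or.inr (by simp)
  isOpen_inter s t hs ht := by
    rcases hs with rfl | hs
    · exact Or.inl (by simp)
    rcases ht with rfl | ht
    · exact Or.inl (by simp)
    · exact Or.inr (by rw [Set.compl_inter]; exact hs.union ht)
  isOpen_sUnion S hS := by
    by_cases h : ∀ s ∈ S, s = ∅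
    · exact Or.inl (by simpa using h)
    · push_neg at h
      obtain ⟨s, hsS, hs⟩ := h
      rcases hS s hsS with he | hsc
      · exact absurd he hs.ne_empty
      · exact Or.inr (hsc.mono (Set.compl_subset_compl.mpr (Set.subset_sUnion_of_mem hsS)))

lemma cocount_isOpen_iff (s : Set CocountReal) : IsOpen s ↔ s = ∅ ∨ sᶜ.Countable := Iff.rfl

instance : T1Space CocountReal := by
  refine t1Space_iff_exists_open.mpr fun x y hxy => ?_
  refine ⟨{y}ᶜ, Or.inr (by simp), by simpa using hxy, by simp⟩

lemma cocount_compact_finite {K : Set CocountReal} (hK : IsCompact K) : K.Finite := by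
  by_contra hinf
  have hinf' : K.Infinite := hinf
  have f := Set.Infinite.natEmbedding K hinf'
  set U : ℕ → Set CocountReal := fun n => ((fun k => (f k : CocountReal)) '' Set.Ioi n)ᶜ with hU
  have hopen : ∀ n, IsOpen (U n) := fun n =>
    Or.inr (by rw [compl_compl]; exact (Set.countable_range _).mono (Set.image_subset_range _ _))
  have hcover : K ⊆ ⋃ n, U n := by
    intro x hx
    by_cases hxr : ∃ k, (f k : CocountReal) = x
    · obtain ⟨k, rfl⟩ := hxr
      refine Set.mem_iUnion.mpr ⟨k, fun hmem => ?_⟩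
      obtain ⟨j, hj, hje⟩ := hmem
      have : f j = f k := Subtype.ext hje
      exact absurd (f.injective this) (Nat.ne_of_gt hj)
    · refine Set.mem_iUnion.mpr ⟨0, fun hmem => ?_⟩
      obtain ⟨j, _, hje⟩ := hmem
      exact hxr ⟨j, hje⟩
  obtain ⟨t, ht⟩ := hK.elim_finite_subcover U hopen hcover
  obtain ⟨N, hN⟩ : ∃ N, ∀ n ∈ t, n ≤ N := ⟨t.sup id, fun n hn => Finset.le_sup (f := id) hn⟩
  have hmem : (f (N + 1) : CocountReal) ∈ K := (f (N + 1)).2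
  have := ht hmem
  obtain ⟨n, hn, hun⟩ := Set.mem_iUnion₂.mp this
  exact hun ⟨N + 1, Nat.lt_succ_of_le (hN n hn), rfl⟩


/-- There is a space that is k₁-Hausdorff but not Hausdorff. -/
theorem exists_k1Hausdorff_not_hausdorff :
    ∃ (X : Type) (_ : TopologicalSpace X), K1Hausdorff X ∧ ¬ T2Space X := by
  refine ⟨CocountReal, inferInstance, ?_, ?_⟩
  · intro K hK
    have h1 : (Prod.fst '' K).Finite := cocount_compact_finite (hK.image continuous_fst)
    have h2 : (Prod.snd '' K).Finite := cocount_compact_finite (hK.image continuous_snd)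
    have hKfin : K.Finite := (h1.prod h2).subset fun p hp => ⟨⟨p, hp, rfl⟩, ⟨p, hp, rfl⟩⟩
    have : Finite K := hKfin.to_subtype
    exact Set.Finite.isClosed (Set.toFinite _)
  · intro h
    have hne : (show CocountReal from (0:ℝ)) ≠ (show CocountReal from (1:ℝ)) :=
      fun h' => (by norm_num : (0:ℝ) ≠ 1) h'
    obtain ⟨u, v, hu, hv, h0, h1, hd⟩ := t2_separation hne
    rcases hu with rfl | hu; · exact h0
    rcases hv with rfl | hv; · exact h1
    have : (Set.univ : Set CocountReal).Countable := by
      have : (Set.univ : Set CocountReal) ⊆ uᶜ ∪ vᶜ := by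
        intro x _
        by_contra hx
        simp only [Set.mem_union, Set.mem_compl_iff, not_or, not_not] at hx
        exact Set.disjoint_left.mp hd hx.1 hx.2
      exact (hu.union hv).mono this
    exact Cardinal.not_countable_real (this.mono (Set.subset_univ _))
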